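/- Let R ∈ ℝ^{3×3} satisfy RᵀR = I₃, and suppose Z(k₃,k₄,k₅) is positive definite. Then the 9×9 matrix P(R;k₃,k₄,k₅) is symmetric positive definite and satisfies λ_min(Z)‖x‖² ≤ xᵀ P(R) x ≤ λ_max(Z)‖x‖² for every x ∈ ℝ⁹, where λ_min(Z) and λ_max(Z) are the smallest and largest eigenvalues of Z(k₃,k₄,k₅). -/

import Mathlib

open Matrix

/-- The 3×3 symmetric matrix `Z(k₃,k₄,k₅)` from the paper. -/
noncomputable def Zmat (k3 k4 k5 : ℝ) : Matrix (Fin 3) (Fin 3) ℝ :=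
  !![k3,  k4,        -k5;
     k4,  k3*k4 - k5, -(k3*k5);
     -k5, -(k3*k5),   k4*k5]

/-- Assemble a 3×3 array of 3×3 blocks into a 9×9 matrix (indexed by `Fin 3 × Fin 3`). -/
noncomputable def blockMat3 (B : Fin 3 → Fin 3 → Matrix (Fin 3) (Fin 3) ℝ) :
    Matrix (Fin 3 × Fin 3) (Fin 3 × Fin 3) ℝ :=
  Matrix.of fun p q => B p.1 q.1 p.2 q.2

/-- The 9×9 block matrix `P(R; k₃,k₄,k₅)` from the paper. -/
noncomputable def Pmat (R : Matrix (Fin 3) (Fin 3) ℝ) (k3 k4 k5 : ℝ) :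
    Matrix (Fin 3 × Fin 3) (Fin 3 × Fin 3) ℝ :=
  blockMat3 ![![k3 • 1, k4 • 1, (-k5) • R],
              ![k4 • 1, (k3*k4 - k5) • 1, (-(k3*k5)) • R],
              ![(-k5) • Rᵀ, (-(k3*k5)) • Rᵀ, (k4*k5) • 1]]

lemma aux_dot_spec {n : Type*} [Fintype n] [DecidableEq n] {A : Matrix n n ℝ}
    (hA : A.IsHermitian) (v : n → ℝ) :
    v ⬝ᵥ A.mulVec v = ∑ i, hA.eigenvalues i *
      ((star (hA.eigenvectorUnitary : Matrix n n ℝ)).mulVec v i) ^ 2 := by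
  set U : Matrix n n ℝ := (hA.eigenvectorUnitary : Matrix n n ℝ)
  set w : n → ℝ := (star U).mulVec v with hw
  conv_lhs => rw [hA.spectral_theorem, Unitary.conjStarAlgAut_apply]
  have hsU : star U = Uᵀ := by
    simp [star_eq_conjTranspose, conjTranspose_eq_transpose_of_trivial]
  have hvm : v ᵥ* U = w := by
    rw [hw, hsU, mulVec_transpose]
  rw [← mulVec_mulVec, ← mulVec_mulVec, dotProduct_mulVec, hvm, hw]
  simp [mulVec_diagonal, dotProduct, mul_comm, mul_assoc, sq, Function.comp]
  exact Finset.sum_congr rfl fun i _ => by ring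

lemma aux_sumsq_spec {n : Type*} [Fintype n] [DecidableEq n] {A : Matrix n n ℝ}
    (hA : A.IsHermitian) (v : n → ℝ) :
    ∑ i, ((star (hA.eigenvectorUnitary : Matrix n n ℝ)).mulVec v i) ^ 2 = ∑ j, v j ^ 2 := by
  set U : Matrix n n ℝ := (hA.eigenvectorUnitary : Matrix n n ℝ)
  have hsU : star U = Uᵀ := by
    simp [star_eq_conjTranspose, conjTranspose_eq_transpose_of_trivial]
  have hU1 : U * Uᵀ = 1 := by
    rw [← hsU]; exact (Matrix.mem_unitaryGroup_iff).mp hA.eigenvectorUnitary.2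
  have h : ((star U).mulVec v) ⬝ᵥ ((star U).mulVec v) = v ⬝ᵥ v := by
    rw [hsU, mulVec_transpose]
    nth_rewrite 2 [← mulVec_transpose U v]
    rw [dotProduct_mulVec, vecMul_vecMul, hU1, vecMul_one]
  simpa [dotProduct, sq] using h

lemma aux_rayleigh {n : Type*} [Fintype n] [DecidableEq n] {A : Matrix n n ℝ}
    (hA : A.IsHermitian) (v : n → ℝ) {c C : ℝ} (hc : ∀ i, c ≤ hA.eigenvalues i)
    (hC : ∀ i, hA.eigenvalues i ≤ C) :
    c * (∑ j, v j ^ 2) ≤ v ⬝ᵥ A.mulVec v ∧ v ⬝ᵥ A.mulVec v ≤ C * (∑ j, v j ^ 2) := by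
  rw [aux_dot_spec hA v, ← aux_sumsq_spec hA v, Finset.mul_sum, Finset.mul_sum]
  constructor <;> apply Finset.sum_le_sum <;> intro i _
  · exact mul_le_mul_of_nonneg_right (hc i) (sq_nonneg _)
  · exact mul_le_mul_of_nonneg_right (hC i) (sq_nonneg _)

/-- If `RᵀR = I₃` and `Z(k₃,k₄,k₅)` is positive definite, then `P(R;k₃,k₄,k₅)` is
symmetric positive definite and `λ_min(Z)‖x‖² ≤ xᵀ P(R) x ≤ λ_max(Z)‖x‖²` for all
`x ∈ ℝ⁹`. -/
theorem stmt13 (k3 k4 k5 : ℝ) (R : Matrix (Fin 3) (Fin 3) ℝ)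
    (hR : Rᵀ * R = 1) (hZ : (Zmat k3 k4 k5).PosDef) :
    (Pmat R k3 k4 k5).IsSymm ∧ (Pmat R k3 k4 k5).PosDef ∧
    ∀ x : Fin 3 × Fin 3 → ℝ,
      (⨅ i, hZ.1.eigenvalues i) * (∑ j, x j ^ 2) ≤ x ⬝ᵥ (Pmat R k3 k4 k5).mulVec x ∧
      x ⬝ᵥ (Pmat R k3 k4 k5).mulVec x ≤ (⨆ i, hZ.1.eigenvalues i) * (∑ j, x j ^ 2) := by
  have hR' : ∀ a b : Fin 3, R 0 a * R 0 b + R 1 a * R 1 b + R 2 a * R 2 b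
      = if a = b then 1 else 0 := by
    intro a b
    have := congrFun (congrFun hR a) b
    simpa [Matrix.mul_apply, Matrix.transpose_apply, Matrix.one_apply, Fin.sum_univ_three]
      using this
  have e00 : R 0 0 * R 0 0 + R 1 0 * R 1 0 + R 2 0 * R 2 0 = 1 := by simpa using hR' 0 0
  have e11 : R 0 1 * R 0 1 + R 1 1 * R 1 1 + R 2 1 * R 2 1 = 1 := by simpa using hR' 1 1
  have e22 : R 0 2 * R 0 2 + R 1 2 * R 1 2 + R 2 2 * R 2 2 = 1 := by simpa using hR' 2 2
  have e01 : R 0 0 * R 0 1 + R 1 0 * R 1 1 + R 2 0 * R 2 1 = 0 := by simpa using hR' 0 1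
  have e02 : R 0 0 * R 0 2 + R 1 0 * R 1 2 + R 2 0 * R 2 2 = 0 := by simpa using hR' 0 2
  have e12 : R 0 1 * R 0 2 + R 1 1 * R 1 2 + R 2 1 * R 2 2 = 0 := by simpa using hR' 1 2
  -- symmetry
  have hsymm : (Pmat R k3 k4 k5).IsSymm := by
    rw [Matrix.IsSymm]
    ext ⟨i, a⟩ ⟨j, b⟩
    fin_cases i <;> fin_cases j <;>
      simp [Pmat, blockMat3, Matrix.transpose_apply, Matrix.one_apply, eq_comm, mul_comm]
  have hHerm : (Pmat R k3 k4 k5).IsHermitian := by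
    rw [Matrix.IsHermitian, conjTranspose_eq_transpose_of_trivial]
    exact hsymm
  -- eigenvalue bounds for Z
  set c : ℝ := ⨅ i, hZ.1.eigenvalues i with hcdef
  set C : ℝ := ⨆ i, hZ.1.eigenvalues i with hCdef
  have hc : ∀ i, c ≤ hZ.1.eigenvalues i := fun i =>
    ciInf_le (Set.Finite.bddBelow (Set.finite_range _)) i
  have hC : ∀ i, hZ.1.eigenvalues i ≤ C := fun i =>
    le_ciSup (Set.Finite.bddAbove (Set.finite_range _)) i
  have hcpos : 0 < c := by
    obtain ⟨i, hi⟩ := Finite.exists_min hZ.1.eigenvalues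
    exact lt_of_lt_of_le (hZ.eigenvalues_pos i) (le_ciInf hi)
  -- the key two-sided bound
  have key : ∀ x : Fin 3 × Fin 3 → ℝ,
      c * (∑ j, x j ^ 2) ≤ x ⬝ᵥ (Pmat R k3 k4 k5).mulVec x ∧
      x ⬝ᵥ (Pmat R k3 k4 k5).mulVec x ≤ C * (∑ j, x j ^ 2) := by
    intro x
    set y : Fin 3 × Fin 3 → ℝ :=
      fun p => if p.1 = 2 then ∑ b, R p.2 b * x (2, b) else x p with hy
    have claimA : x ⬝ᵥ (Pmat R k3 k4 k5).mulVec x =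
        ∑ d : Fin 3, (fun i => y (i, d)) ⬝ᵥ (Zmat k3 k4 k5).mulVec (fun i => y (i, d)) := by
      simp only [Pmat, blockMat3, Zmat, Matrix.mulVec, dotProduct, Matrix.of_apply,
        Fintype.sum_prod_type, Fin.sum_univ_three, Matrix.smul_apply, Matrix.one_apply,
        Matrix.transpose_apply, Matrix.cons_val_zero, Matrix.cons_val_one, Matrix.head_cons,
        Matrix.cons_val_two, Matrix.tail_cons, hy, Matrix.cons_val', Matrix.empty_val',
        Matrix.cons_val_fin_one, Matrix.head_fin_const, Fin.reduceEq, reduceIte, ite_true,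
        ite_false, smul_eq_mul]
      linear_combination (-(k4*k5*x (2,0)*x (2,0))) * e00 + (-(2*k4*k5*x (2,0)*x (2,1))) * e01 +
        (-(2*k4*k5*x (2,0)*x (2,2))) * e02 +
        (-(k4*k5*x (2,1)*x (2,1))) * e11 + (-(2*k4*k5*x (2,1)*x (2,2))) * e12 +
        (-(k4*k5*x (2,2)*x (2,2))) * e22
    have claimB : ∑ j, y j ^ 2 = ∑ j, x j ^ 2 := by
      simp only [Fintype.sum_prod_type, Fin.sum_univ_three, hy, Fin.reduceEq, reduceIte,
        ite_true, ite_false]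
      linear_combination (x (2,0)*x (2,0)) * e00 + (2*x (2,0)*x (2,1)) * e01 +
        (2*x (2,0)*x (2,2)) * e02 + (x (2,1)*x (2,1)) * e11 + (2*x (2,1)*x (2,2)) * e12 +
        (x (2,2)*x (2,2)) * e22
    have hsplit : ∑ j, y j ^ 2 = ∑ d : Fin 3, ∑ i : Fin 3, y (i, d) ^ 2 := by
      rw [Fintype.sum_prod_type]; exact Finset.sum_comm
    have hray := fun d : Fin 3 => aux_rayleigh hZ.1 (fun i => y (i, d)) hc hC
    constructor
    · calc c * ∑ j, x j ^ 2 = ∑ d : Fin 3, c * ∑ i : Fin 3, y (i, d) ^ 2 := by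
            rw [← Finset.mul_sum, ← hsplit, claimB]
      _ ≤ ∑ d : Fin 3, (fun i => y (i, d)) ⬝ᵥ (Zmat k3 k4 k5).mulVec (fun i => y (i, d)) :=
            Finset.sum_le_sum fun d _ => (hray d).1
      _ = x ⬝ᵥ (Pmat R k3 k4 k5).mulVec x := claimA.symm
    · calc x ⬝ᵥ (Pmat R k3 k4 k5).mulVec x
          = ∑ d : Fin 3, (fun i => y (i, d)) ⬝ᵥ (Zmat k3 k4 k5).mulVec (fun i => y (i, d)) :=
            claimA
      _ ≤ ∑ d : Fin 3, C * ∑ i : Fin 3, y (i, d) ^ 2 :=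
            Finset.sum_le_sum fun d _ => (hray d).2
      _ = C * ∑ j, x j ^ 2 := by rw [← Finset.mul_sum, ← hsplit, claimB]
  refine ⟨hsymm, PosDef.of_dotProduct_mulVec_pos hHerm fun v hv => ?_, key⟩
  have hvsum : 0 < ∑ j, v j ^ 2 := by
    obtain ⟨j, hj⟩ := Function.ne_iff.mp hv
    exact Finset.sum_pos' (fun _ _ => sq_nonneg _) ⟨j, Finset.mem_univ j, sq_pos_of_ne_zero hj⟩
  have h := (key v).1
  have : (0 : ℝ) < v ⬝ᵥ (Pmat R k3 k4 k5).mulVec v :=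
    lt_of_lt_of_le (mul_pos hcpos hvsum) h
  simpa using this
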